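/- Suppose Ψ : ℝ → ℝ is C², satisfies the identity (1/2)Ψ'(s)² = Ψ(s)²(1 - Ψ(s)/2)² + ∫_{-∞}^{s} Ψ'(σ)² dσ for all s, and Ψ(s) ~ e^{2s} as s → -∞ with Ψ' > 0 near -∞. Then Ψ' never vanishes, Ψ is strictly increasing, and Ψ crosses the value 1, i.e., there exists s₁ with Ψ(s₁) > 1. -/

import Mathlib

open Real Filter Set MeasureTheory

theorem stmt3 (Ψ : ℝ → ℝ) (hC2 : ContDiff ℝ 2 Ψ)
    (henergy : ∀ s : ℝ, (1 / 2) * (deriv Ψ s) ^ 2 =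
      (Ψ s) ^ 2 * (1 - Ψ s / 2) ^ 2 + ∫ σ in Iic s, (deriv Ψ σ) ^ 2)
    (hasymp : Tendsto (fun s => Ψ s / Real.exp (2 * s)) atBot (nhds 1))
    (hpos : ∀ᶠ s in atBot, 0 < deriv Ψ s) :
    (∀ s : ℝ, deriv Ψ s ≠ 0) ∧ StrictMono Ψ ∧ ∃ s₁ : ℝ, 1 < Ψ s₁ := by
  have hcont : Continuous (deriv Ψ) := hC2.continuous_deriv (by norm_num)
  set f : ℝ → ℝ := fun σ => (deriv Ψ σ) ^ 2 with hfdef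
  have hfc : Continuous f := hcont.pow 2
  have hfnn : ∀ σ, 0 ≤ f σ := fun σ => sq_nonneg _
  obtain ⟨a, ha⟩ := eventually_atBot.mp hpos
  -- Step A: integrability of f on every Iic s
  have hIntAll : ∀ s : ℝ, IntegrableOn f (Iic s) := by
    by_cases hS : ∃ t, IntegrableOn f (Iic t)
    · obtain ⟨t, ht⟩ := hS
      intro s
      rcases le_total s t with h | h
      · exact ht.mono_set (Iic_subset_Iic.mpr h)
      · have hsub : Iic s ⊆ Iic t ∪ Icc t s := by
          intro x hx
          rcases le_total x t with h' | h'
          · exact Or.inl h'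
          · exact Or.inr ⟨h', hx⟩
        exact ((ht.union (hfc.integrableOn_Icc)).mono_set hsub)
    · push_neg at hS
      exfalso
      have hzero : ∀ s, (∫ σ in Iic s, f σ) = 0 := fun s => integral_undef (hS s)
      have hode : ∀ s, (deriv Ψ s) ^ 2 = 2 * ((Ψ s) ^ 2 * (1 - Ψ s / 2) ^ 2) := by
        intro s
        have h := henergy s
        rw [hzero s] at h
        linarith
      -- eventual bounds near -∞
      have h1 : ∀ᶠ s in atBot, Ψ s / Real.exp (2 * s) ∈ Ioo (1/2 : ℝ) (3/2) :=
        hasymp (Ioo_mem_nhds (by norm_num) (by norm_num))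
      have h2 : Tendsto (fun s : ℝ => Real.exp (2 * s)) atBot (nhds 0) :=
        Real.tendsto_exp_atBot.comp (tendsto_const_nhds.pos_mul_atBot two_pos tendsto_id
          |>.congr (fun x => rfl))
      have h3 : ∀ᶠ s in atBot, Real.exp (2 * s) < 2/3 := by
        have := h2 (Iio_mem_nhds (by norm_num : (0:ℝ) < 2/3))
        filter_upwards [this] with s hs using hs
      obtain ⟨b, hb⟩ := eventually_atBot.mp (h1.and h3)
      apply hS b
      -- on Iic b : 0 < Ψ s < 1, Ψ s ≤ (3/2) exp (2 s)
      have hbound : ∀ s ≤ b, f s ≤ (9/2) * Real.exp (3 * b) * Real.exp s := by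
        intro s hs
        obtain ⟨⟨hl, hr⟩, he⟩ := hb s hs
        have hepos : 0 < Real.exp (2 * s) := Real.exp_pos _
        have hΨl : 0 < Ψ s := by
          have := (div_pos_iff.mp (lt_trans (by norm_num) hl))
          rcases this with ⟨h, _⟩ | ⟨_, h⟩
          · exact h
          · linarith
        have hΨr : Ψ s ≤ (3/2) * Real.exp (2 * s) := by
          rw [div_lt_iff₀ hepos] at hr
          linarith
        have hΨ2 : Ψ s ≤ 2 := by
          have h2s : Real.exp (2 * s) < 2/3 := lt_of_le_of_lt (by
            apply Real.exp_le_exp.mpr; linarith) he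
          calc Ψ s ≤ (3/2) * Real.exp (2 * s) := hΨr
            _ ≤ (3/2) * (2/3) := by nlinarith
            _ ≤ 2 := by norm_num
        have hsq : (1 - Ψ s / 2) ^ 2 ≤ 1 := by nlinarith
        have hΨsq : (Ψ s) ^ 2 ≤ (9/4) * (Real.exp (2 * s)) ^ 2 := by nlinarith
        have hexp : (Real.exp (2 * s)) ^ 2 ≤ Real.exp (3 * b) * Real.exp s := by
          rw [← Real.exp_add, ← Real.exp_nat_mul]
          apply Real.exp_le_exp.mpr
          push_cast
          linarith
        calc f s = 2 * ((Ψ s) ^ 2 * (1 - Ψ s / 2) ^ 2) := hode s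
          _ ≤ 2 * ((Ψ s) ^ 2 * 1) := by nlinarith [sq_nonneg (Ψ s), mul_nonneg (sq_nonneg (Ψ s)) (sq_nonneg (1 - Ψ s / 2))]
          _ ≤ 2 * ((9/4) * (Real.exp (2 * s)) ^ 2) := by nlinarith
          _ ≤ (9/2) * (Real.exp (3 * b) * Real.exp s) := by nlinarith
          _ = (9/2) * Real.exp (3 * b) * Real.exp s := by ring
      have hg : IntegrableOn (fun σ => (9/2) * Real.exp (3 * b) * Real.exp σ) (Iic b) :=
        (integrableOn_exp_Iic b).const_mul _
      refine hg.mono' (hfc.aestronglyMeasurable.restrict) ?_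
      rw [ae_restrict_iff' measurableSet_Iic]
      filter_upwards with s hs
      rw [Real.norm_of_nonneg (hfnn s)]
      exact hbound s hs
  -- positivity of the integral
  have hIpos : ∀ s : ℝ, 0 < ∫ σ in Iic s, f σ := by
    intro s
    rw [setIntegral_pos_iff_support_of_nonneg_ae
      (Eventually.of_forall fun σ => hfnn σ) (hIntAll s)]
    have hsub : Iic (min a s) ⊆ Function.support f ∩ Iic s := by
      intro x hx
      have hx' : x ≤ min a s := mem_Iic.mp hx
      refine ⟨?_, mem_Iic.mpr (le_trans hx' (min_le_right a s))⟩
      have := ha x (le_trans hx' (min_le_left a s))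
      exact Function.mem_support.mpr (ne_of_gt (pow_pos this 2))
    calc (0 : ENNReal) < ⊤ := by simp
      _ = volume (Iic (min a s)) := (Real.volume_Iic).symm
      _ ≤ volume (Function.support f ∩ Iic s) := measure_mono hsub
  -- (1) deriv never vanishes
  have hne : ∀ s : ℝ, deriv Ψ s ≠ 0 := by
    intro s h
    have he := henergy s
    have h1 : 0 ≤ (Ψ s) ^ 2 * (1 - Ψ s / 2) ^ 2 :=
      mul_nonneg (sq_nonneg _) (sq_nonneg _)
    have h2 := hIpos s
    rw [h] at he
    simp at he
    linarith
  -- (2) deriv positive everywhere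
  have hdpos : ∀ s : ℝ, 0 < deriv Ψ s := by
    intro s
    rcases lt_trichotomy 0 (deriv Ψ s) with h | h | h
    · exact h
    · exact absurd h.symm (hne s)
    · exfalso
      set b := min a s with hbdef
      have hb1 : 0 < deriv Ψ b := ha b (min_le_left _ _)
      have hbs : b ≤ s := min_le_right _ _
      have := intermediate_value_Icc' hbs (hcont.continuousOn (s := Icc b s))
      have h0 : (0:ℝ) ∈ Icc (deriv Ψ s) (deriv Ψ b) := ⟨le_of_lt h, le_of_lt hb1⟩
      obtain ⟨c, _, hc⟩ := this h0
      exact hne c hc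
  have hmono : StrictMono Ψ := strictMono_of_deriv_pos hdpos
  refine ⟨hne, hmono, ?_⟩
  -- (3) crosses 1
  set c := ∫ σ in Iic 0, f σ with hcdef
  have hc : 0 < c := hIpos 0
  set K := Real.sqrt (2 * c) with hKdef
  have hK : 0 < K := Real.sqrt_pos.mpr (by linarith)
  have hKd : ∀ x : ℝ, 0 ≤ x → K ≤ deriv Ψ x := by
    intro x hx
    have hI : c ≤ ∫ σ in Iic x, f σ :=
      setIntegral_mono_set (hIntAll x) (Eventually.of_forall fun σ => hfnn σ)
        (HasSubset.Subset.eventuallyLE (Iic_subset_Iic.mpr hx))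
    have he := henergy x
    have h1 : 0 ≤ (Ψ x) ^ 2 * (1 - Ψ x / 2) ^ 2 :=
      mul_nonneg (sq_nonneg _) (sq_nonneg _)
    have h2 : 2 * c ≤ (deriv Ψ x) ^ 2 := by linarith
    calc K ≤ Real.sqrt ((deriv Ψ x) ^ 2) := Real.sqrt_le_sqrt h2
      _ = deriv Ψ x := by rw [Real.sqrt_sq (le_of_lt (hdpos x))]
  set y := (|1 - Ψ 0| + 1) / K with hydef
  have hy : 0 ≤ y := div_nonneg (by positivity) (le_of_lt hK)
  have hgrow := (convex_Ici (0:ℝ)).mul_sub_le_image_sub_of_le_deriv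
    (hC2.continuous.continuousOn)
    ((hC2.differentiable (by norm_num)).differentiableOn)
    (fun x hx => hKd x (le_of_lt (by simpa [interior_Ici] using hx)))
    0 (self_mem_Ici) y hy hy
  refine ⟨y, ?_⟩
  have hKy : K * (y - 0) = |1 - Ψ 0| + 1 := by
    rw [sub_zero, hydef, mul_div_cancel₀ _ (ne_of_gt hK)]
  have habs : 1 - Ψ 0 ≤ |1 - Ψ 0| := le_abs_self _
  rw [hKy] at hgrow
  linarith
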